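/- Let X ∈ ℝ^{n×d} be full rank with all size-s subsets full rank, d ≤ s ≤ n, and let S be drawn by size-s volume sampling. Then the matrix variance of the pseudoinverse estimator satisfies E[(I_S X)^+ ((I_S X)^+)^⊤] − E[(I_S X)^+] · E[(I_S X)^+]^⊤ = ((n−s)/(s−d+1)) · X^+ (X^+)^⊤. -/

import Mathlib

open Matrix Finset

noncomputable section

/-- The submatrix of `X` consisting of the rows indexed by the subset `S`. -/
def rowSub {n d : ℕ} (X : Matrix (Fin n) (Fin d) ℝ) (S : Finset (Fin n)) :
    Matrix {i // i ∈ S} (Fin d) ℝ :=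
  X.submatrix (fun i => (i : Fin n)) id

/-- `X_S^⊤ X_S`. -/
def gram {n d : ℕ} (X : Matrix (Fin n) (Fin d) ℝ) (S : Finset (Fin n)) :
    Matrix (Fin d) (Fin d) ℝ :=
  (rowSub X S)ᵀ * rowSub X S

/-- The four Penrose conditions characterizing the Moore–Penrose pseudoinverse. -/
def IsMoorePenrose {m p : Type*} [Fintype m] [Fintype p]
    (A : Matrix m p ℝ) (B : Matrix p m ℝ) : Prop :=
  A * B * A = A ∧ B * A * B = B ∧ (A * B)ᵀ = A * B ∧ (B * A)ᵀ = B * A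

/-- The Moore–Penrose pseudoinverse `A⁺` of a real matrix. -/
def pinv {m p : Type*} [Fintype m] [Fintype p] (A : Matrix m p ℝ) : Matrix p m ℝ := by
  classical exact if h : ∃ B, IsMoorePenrose A B then h.choose else 0

/-- The diagonal 0/1 selection matrix `I_S`. -/
def sel {n : ℕ} (S : Finset (Fin n)) : Matrix (Fin n) (Fin n) ℝ :=
  Matrix.diagonal (fun i => if i ∈ S then 1 else 0)

lemma detExpand {ι : Type*} [Fintype ι] [DecidableEq ι] {d : ℕ}
    (A B : Matrix ι (Fin d) ℝ) (w : ι → ℝ) :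
    (Aᵀ * Matrix.diagonal w * B).det =
      ∑ φ : Fin d → ι, (∏ k, w (φ k) * B (φ k) k) *
        (Matrix.of fun i k => A (φ k) i).det := by
  have hentry : ∀ a b, (Aᵀ * Matrix.diagonal w * B) a b
      = ∑ r, A r a * (w r * B r b) := by
    intro a b
    rw [Matrix.mul_apply]
    simp only [Matrix.mul_diagonal, Matrix.transpose_apply, mul_assoc]
  calc (Aᵀ * Matrix.diagonal w * B).det
      = ∑ σ : Equiv.Perm (Fin d), Equiv.Perm.sign σ •
          ∏ k, ∑ r, A r (σ k) * (w r * B r k) := by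
        rw [Matrix.det_apply]
        exact Finset.sum_congr rfl fun σ _ => by rw [show (∏ k, (Aᵀ * Matrix.diagonal w * B) (σ k) k) = ∏ k, ∑ r, A r (σ k) * (w r * B r k) from Finset.prod_congr rfl fun k _ => hentry _ _]
    _ = ∑ σ : Equiv.Perm (Fin d), ∑ φ : Fin d → ι, Equiv.Perm.sign σ •
          ∏ k, A (φ k) (σ k) * (w (φ k) * B (φ k) k) := by
        refine Finset.sum_congr rfl fun σ _ => ?_
        rw [Finset.prod_univ_sum]
        rw [← Fintype.piFinset_univ]
        rw [Finset.smul_sum]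
    _ = ∑ φ : Fin d → ι, ∑ σ : Equiv.Perm (Fin d), Equiv.Perm.sign σ •
          ∏ k, A (φ k) (σ k) * (w (φ k) * B (φ k) k) := Finset.sum_comm
    _ = ∑ φ : Fin d → ι, (∏ k, w (φ k) * B (φ k) k) *
        (Matrix.of fun i k => A (φ k) i).det := by
        refine Finset.sum_congr rfl fun φ _ => ?_
        rw [Matrix.det_apply, Finset.mul_sum]
        refine Finset.sum_congr rfl fun σ _ => ?_
        rw [Finset.prod_mul_distrib]
        rw [mul_smul_comm]
        congr 1
        rw [mul_comm]
        rfl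

lemma card_supersets {ι : Type*} [Fintype ι] [DecidableEq ι] (T : Finset ι) (s : ℕ)
    (hT : T.card ≤ s) :
    ((Finset.powersetCard s (univ : Finset ι)).filter (fun S => T ⊆ S)).card
      = (Fintype.card ι - T.card).choose (s - T.card) := by
  rw [← Finset.card_compl T, ← Finset.card_powersetCard (s - T.card) Tᶜ]
  apply Finset.card_bij' (fun S _ => S \ T) (fun U _ => U ∪ T)
  · intro S hS
    simp only [Finset.mem_filter, Finset.mem_powersetCard] at hS
    simp only [Finset.mem_powersetCard]
    exact ⟨fun x hx => by simp only [Finset.mem_compl]; exact (Finset.mem_sdiff.mp hx).2,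
      by rw [Finset.card_sdiff_of_subset hS.2, hS.1.2]⟩
  · intro U hU
    simp only [Finset.mem_powersetCard] at hU
    have hdisj : Disjoint U T := fun V hVU hVT =>
      Finset.le_iff_subset.mpr (fun x hx => absurd ((hU.1 (hVU hx))) (by simp [hVT hx]))
    simp only [Finset.mem_filter, Finset.mem_powersetCard]
    refine ⟨⟨Finset.subset_univ _, ?_⟩, Finset.subset_union_right⟩
    rw [Finset.card_union_of_disjoint hdisj, hU.2, Nat.sub_add_cancel hT]
  · intro S hS
    simp only [Finset.mem_filter] at hS
    exact Finset.sdiff_union_of_subset hS.2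
  · intro U hU
    simp only [Finset.mem_powersetCard] at hU
    have hdisj : Disjoint U T := fun V hVU hVT =>
      Finset.le_iff_subset.mpr (fun x hx => absurd ((hU.1 (hVU hx))) (by simp [hVT hx]))
    rw [Finset.union_sdiff_right]
    exact Finset.sdiff_eq_self_of_disjoint hdisj

lemma cbsum {ι : Type*} [Fintype ι] [DecidableEq ι] {d : ℕ} (s : ℕ)
    (hds : d ≤ s) (A B : Matrix ι (Fin d) ℝ) :
    ∑ S ∈ Finset.powersetCard s (univ : Finset ι),
        (Aᵀ * Matrix.diagonal (fun i => if i ∈ S then (1:ℝ) else 0) * B).det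
      = ((Fintype.card ι - d).choose (s - d) : ℝ) * (Aᵀ * B).det := by
  have hAB : (Aᵀ * B).det
      = ∑ φ : Fin d → ι, (∏ k, B (φ k) k) * (Matrix.of fun i k => A (φ k) i).det := by
    have h := detExpand A B (fun _ => 1)
    simpa using h
  simp only [detExpand]
  rw [Finset.sum_comm, hAB, Finset.mul_sum]
  refine Finset.sum_congr rfl fun φ _ => ?_
  have hsplit : ∀ S : Finset ι,
      (∏ k, (if φ k ∈ S then (1:ℝ) else 0) * B (φ k) k)
        = (if univ.image φ ⊆ S then (1:ℝ) else 0) * ∏ k, B (φ k) k := by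
    intro S
    rw [Finset.prod_mul_distrib, Fintype.prod_boole]
    congr 2
    simp [Finset.image_subset_iff]
  simp only [hsplit]
  rw [← Finset.sum_mul, ← Finset.sum_mul]
  by_cases hinj : Function.Injective φ
  · have hcard : (univ.image φ).card = d := by
      rw [Finset.card_image_of_injective _ hinj, Finset.card_univ, Fintype.card_fin]
    rw [Finset.sum_boole, card_supersets _ s (by rw [hcard]; exact hds), hcard, mul_assoc]
  · obtain ⟨k₁, k₂, heq, hne⟩ : ∃ k₁ k₂, φ k₁ = φ k₂ ∧ k₁ ≠ k₂ := by
      simp only [Function.Injective] at hinj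
      push_neg at hinj
      obtain ⟨a, b, h1, h2⟩ := hinj
      exact ⟨a, b, h1, h2⟩
    have hdet : (Matrix.of fun i k => A (φ k) i).det = 0 :=
      Matrix.det_zero_of_column_eq hne (fun k => by simp [heq])
    simp [hdet]

lemma mp_unique {m p : Type*} [Fintype m] [Fintype p]
    (A : Matrix m p ℝ) (B C : Matrix p m ℝ)
    (hB : IsMoorePenrose A B) (hC : IsMoorePenrose A C) : B = C := by
  obtain ⟨hB1, hB2, hB3, hB4⟩ := hB
  obtain ⟨hC1, hC2, hC3, hC4⟩ := hC
  have hABC : A * B = A * C := by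
    calc A * B = (A * C * A) * B := by rw [hC1]
      _ = (A * C) * (A * B) := by rw [Matrix.mul_assoc]
      _ = (A * C)ᵀ * (A * B)ᵀ := by rw [hC3, hB3]
      _ = Cᵀ * ((A * B * A)ᵀ) := by
          simp only [Matrix.transpose_mul, Matrix.mul_assoc]
      _ = Cᵀ * Aᵀ := by rw [hB1]
      _ = (A * C)ᵀ := by rw [Matrix.transpose_mul]
      _ = A * C := hC3
  have hBCA : B * A = C * A := by
    calc B * A = B * (A * C * A) := by rw [hC1]
      _ = (B * A) * (C * A) := by simp only [Matrix.mul_assoc]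
      _ = (B * A)ᵀ * (C * A)ᵀ := by rw [hB4, hC4]
      _ = ((A * B * A)ᵀ) * Cᵀ := by
          simp only [Matrix.transpose_mul, Matrix.mul_assoc]
      _ = Aᵀ * Cᵀ := by rw [hB1]
      _ = (C * A)ᵀ := by rw [Matrix.transpose_mul]
      _ = C * A := hC4
  calc B = B * A * B := hB2.symm
    _ = B * (A * C) := by rw [Matrix.mul_assoc, hABC]
    _ = (C * A) * C := by rw [← Matrix.mul_assoc, hBCA]
    _ = C := hC2

lemma pinv_eq {m p : Type*} [Fintype m] [Fintype p]
    {A : Matrix m p ℝ} {B : Matrix p m ℝ} (h : IsMoorePenrose A B) : pinv A = B := by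
  unfold pinv
  rw [dif_pos ⟨B, h⟩]
  exact mp_unique A _ B (Exists.choose_spec ⟨B, h⟩) h

lemma isMP_proj {n d : ℕ} (X : Matrix (Fin n) (Fin d) ℝ) (W : Matrix (Fin n) (Fin n) ℝ)
    (hWs : Wᵀ = W) (hWW : W * W = W) (hdet : IsUnit (Xᵀ * W * X).det) :
    IsMoorePenrose (W * X) ((Xᵀ * W * X)⁻¹ * (Xᵀ * W)) := by
  set G := Xᵀ * W * X with hG
  have hGs : Gᵀ = G := by
    rw [hG, Matrix.transpose_mul, Matrix.transpose_mul, Matrix.transpose_transpose, hWs,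
      Matrix.mul_assoc]
  have hGi : G⁻¹ * G = 1 := Matrix.nonsing_inv_mul G hdet
  have hGi' : G * G⁻¹ = 1 := Matrix.mul_nonsing_inv G hdet
  have hGit : (G⁻¹)ᵀ = G⁻¹ := by rw [Matrix.transpose_nonsing_inv, hGs]
  have hW2 : W * (W * X) = W * X := by rw [← Matrix.mul_assoc, hWW]
  have hXG : Xᵀ * (W * X) = G := by rw [hG, Matrix.mul_assoc]
  refine ⟨?_, ?_, ?_, ?_⟩
  · calc W * X * (G⁻¹ * (Xᵀ * W)) * (W * X)
        = W * (X * (G⁻¹ * (Xᵀ * (W * (W * X))))) := by simp only [Matrix.mul_assoc]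
      _ = W * (X * (G⁻¹ * G)) := by rw [hW2, hXG]
      _ = W * X := by rw [hGi, Matrix.mul_one]
  · calc G⁻¹ * (Xᵀ * W) * (W * X) * (G⁻¹ * (Xᵀ * W))
        = G⁻¹ * (Xᵀ * (W * (W * X))) * (G⁻¹ * (Xᵀ * W)) := by simp only [Matrix.mul_assoc]
      _ = (G⁻¹ * G) * (G⁻¹ * (Xᵀ * W)) := by rw [hW2, hXG]
      _ = G⁻¹ * (Xᵀ * W) := by rw [hGi, Matrix.one_mul]
  · have : W * X * (G⁻¹ * (Xᵀ * W)) = W * (X * G⁻¹ * Xᵀ) * W := by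
      simp only [Matrix.mul_assoc]
    rw [this]
    simp only [Matrix.transpose_mul, Matrix.transpose_transpose, hWs, hGit]
    simp only [Matrix.mul_assoc]
  · have : G⁻¹ * (Xᵀ * W) * (W * X) = 1 := by
      rw [Matrix.mul_assoc, Matrix.mul_assoc] at *
      calc G⁻¹ * (Xᵀ * (W * (W * X))) = G⁻¹ * G := by rw [hW2, hXG]
        _ = 1 := hGi
    rw [this, Matrix.transpose_one]

lemma updateColumn_mul {m p q : Type*} [Fintype p] [Fintype q] [DecidableEq q]
    (M : Matrix m p ℝ) (N : Matrix p q ℝ) (i : q) (v : p → ℝ) :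
    (M * N).updateCol i (M *ᵥ v) = M * (N.updateCol i v) := by
  ext a b
  by_cases h : b = i <;>
    simp [h, Matrix.updateCol_apply, Matrix.mul_apply, Matrix.mulVec, dotProduct]

lemma adj_mul_entry {n d : ℕ} (X : Matrix (Fin n) (Fin d) ℝ) (W : Matrix (Fin n) (Fin n) ℝ)
    (i : Fin d) (r : Fin n) :
    ((Xᵀ * W * X).adjugate * (Xᵀ * W)) i r
      = (Xᵀ * W * (X.updateCol i (Pi.single r 1))).det := by
  have h1 : ((Xᵀ * W * X).adjugate * (Xᵀ * W)) i r
      = ((Xᵀ * W * X).adjugate *ᵥ (fun j => (Xᵀ * W) j r)) i := by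
    simp [Matrix.mul_apply, Matrix.mulVec, dotProduct]
  rw [h1, ← Matrix.cramer_eq_adjugate_mulVec, Matrix.cramer_apply]
  have h2 : (fun j => (Xᵀ * W) j r) = (Xᵀ * W) *ᵥ (Pi.single r 1) := by
    ext j
    simp [Matrix.mulVec_single]
  rw [h2, updateColumn_mul, Matrix.mul_assoc]

lemma sum_adj_mul {n d : ℕ} (X : Matrix (Fin n) (Fin d) ℝ) (s : ℕ) (hds : d ≤ s) :
    ∑ S ∈ Finset.powersetCard s (univ : Finset (Fin n)),
        (Xᵀ * sel S * X).adjugate * (Xᵀ * sel S)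
      = (((n - d).choose (s - d) : ℕ) : ℝ) • ((Xᵀ * X).adjugate * Xᵀ) := by
  ext i r
  rw [Matrix.sum_apply]
  simp only [Matrix.smul_apply, smul_eq_mul]
  have hterm : ∀ S ∈ Finset.powersetCard s (univ : Finset (Fin n)),
      ((Xᵀ * sel S * X).adjugate * (Xᵀ * sel S)) i r
        = (Xᵀ * sel S * (X.updateCol i (Pi.single r 1))).det := fun S _ =>
    adj_mul_entry X (sel S) i r
  rw [Finset.sum_congr rfl hterm]
  have := cbsum s hds X (X.updateCol i (Pi.single r 1))
  rw [Fintype.card_fin] at this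
  simp only [sel]
  rw [this]
  have h1 := adj_mul_entry X 1 i r
  simp only [Matrix.mul_one] at h1
  rw [h1]

lemma adj_symm_entry {d : ℕ} (M : Matrix (Fin d) (Fin d) ℝ) (hMs : Mᵀ = M) (i j : Fin d) :
    M.adjugate i j = (M.updateCol j (Pi.single i 1)).det := by
  rw [Matrix.adjugate_apply, ← Matrix.det_transpose, ← Matrix.updateCol_transpose, hMs]

lemma sum_adj {n d : ℕ} (X : Matrix (Fin n) (Fin d) ℝ) (s : ℕ) (hdn : d ≤ n) (hds : d ≤ s) :
    ∑ S ∈ Finset.powersetCard s (univ : Finset (Fin n)), (Xᵀ * sel S * X).adjugate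
      = (((n - d + 1).choose (s - d + 1) : ℕ) : ℝ) • (Xᵀ * X).adjugate := by
  have hsymm : ∀ S : Finset (Fin n), (Xᵀ * sel S * X)ᵀ = Xᵀ * sel S * X := by
    intro S
    rw [Matrix.transpose_mul, Matrix.transpose_mul, Matrix.transpose_transpose,
      show (sel S)ᵀ = sel S from Matrix.diagonal_transpose _, Matrix.mul_assoc]
  have hsymm1 : (Xᵀ * X)ᵀ = Xᵀ * X := by
    rw [Matrix.transpose_mul, Matrix.transpose_transpose]
  ext i j
  rw [Matrix.sum_apply]
  simp only [Matrix.smul_apply, smul_eq_mul]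
  simp only [fun S => adj_symm_entry (Xᵀ * sel S * X) (hsymm S) i j,
    adj_symm_entry (Xᵀ * X) hsymm1 i j]
  -- augmented matrices
  set A' : Matrix (Fin n ⊕ Unit) (Fin d) ℝ :=
    Matrix.of (Sum.elim (fun r => X r) (fun _ => Pi.single i 1)) with hA'
  set B' : Matrix (Fin n ⊕ Unit) (Fin d) ℝ :=
    Matrix.of (Sum.elim (fun r => X.updateCol j (fun _ => 0) r) (fun _ => Pi.single j 1)) with hB'
  have claim1 : ∀ Sh : Finset (Fin n ⊕ Unit), Sum.inr () ∈ Sh →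
      A'ᵀ * Matrix.diagonal (fun x => if x ∈ Sh then (1:ℝ) else 0) * B'
        = (Xᵀ * sel Sh.toLeft * X).updateCol j (Pi.single i 1) := by
    intro Sh hr
    ext a b
    have hL : (A'ᵀ * Matrix.diagonal (fun x => if x ∈ Sh then (1:ℝ) else 0) * B') a b
        = ∑ x : Fin n ⊕ Unit, A' x a * ((if x ∈ Sh then (1:ℝ) else 0) * B' x b) := by
      rw [Matrix.mul_apply]
      simp only [Matrix.mul_diagonal, Matrix.transpose_apply, mul_assoc]
    rw [hL, Fintype.sum_sum_type]
    by_cases hb : b = j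
    · subst hb
      simp only [hA', hB', Matrix.of_apply, Sum.elim_inl, Sum.elim_inr,
        Matrix.updateCol_self, Pi.single_eq_same, hr, if_pos, mul_zero, mul_one,
        Finset.sum_const_zero, zero_add, Matrix.updateCol_self]
      simp
    · have hR : ((Xᵀ * sel Sh.toLeft * X).updateCol j (Pi.single i 1)) a b
          = (Xᵀ * sel Sh.toLeft * X) a b := Matrix.updateCol_ne hb
      rw [hR]
      have hRR : (Xᵀ * sel Sh.toLeft * X) a b
          = ∑ r : Fin n, X r a * ((if Sum.inl r ∈ Sh then (1:ℝ) else 0) * X r b) := by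
        rw [Matrix.mul_apply]
        simp only [sel, Matrix.mul_diagonal, Matrix.transpose_apply, mul_assoc,
          Finset.mem_toLeft]
      rw [hRR]
      simp only [hA', hB', Matrix.of_apply, Sum.elim_inl, Sum.elim_inr,
        Matrix.updateCol_ne hb, Pi.single_eq_of_ne hb, mul_zero, add_zero,
        Finset.sum_const_zero, Fintype.univ_punit, Finset.sum_singleton]
  have claim2 : ∀ Sh : Finset (Fin n ⊕ Unit), Sum.inr () ∉ Sh →
      (A'ᵀ * Matrix.diagonal (fun x => if x ∈ Sh then (1:ℝ) else 0) * B').det = 0 := by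
    intro Sh hr
    apply Matrix.det_eq_zero_of_column_eq_zero j
    intro a
    have hL : (A'ᵀ * Matrix.diagonal (fun x => if x ∈ Sh then (1:ℝ) else 0) * B') a j
        = ∑ x : Fin n ⊕ Unit, A' x a * ((if x ∈ Sh then (1:ℝ) else 0) * B' x j) := by
      rw [Matrix.mul_apply]
      simp only [Matrix.mul_diagonal, Matrix.transpose_apply, mul_assoc]
    rw [hL, Fintype.sum_sum_type]
    simp [hA', hB', hr]
  -- the big sum over the augmented ground set
  have hmain := cbsum (ι := Fin n ⊕ Unit) (s + 1) (hds.trans (Nat.le_succ s)) A' B'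
  rw [← Finset.sum_filter_add_sum_filter_not
    (Finset.powersetCard (s+1) (univ : Finset (Fin n ⊕ Unit)))
    (fun Sh => Sum.inr () ∈ Sh)] at hmain
  have hzero : ∑ Sh ∈ (Finset.powersetCard (s+1) (univ : Finset (Fin n ⊕ Unit))).filter
      (fun Sh => ¬ Sum.inr () ∈ Sh),
      (A'ᵀ * Matrix.diagonal (fun x => if x ∈ Sh then (1:ℝ) else 0) * B').det = 0 := by
    apply Finset.sum_eq_zero
    intro Sh hSh
    exact claim2 Sh (Finset.mem_filter.mp hSh).2
  rw [hzero, add_zero] at hmain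
  -- bijection between filtered augmented subsets and plain subsets
  have hbij : ∑ Sh ∈ (Finset.powersetCard (s+1) (univ : Finset (Fin n ⊕ Unit))).filter
      (fun Sh => Sum.inr () ∈ Sh),
      (A'ᵀ * Matrix.diagonal (fun x => if x ∈ Sh then (1:ℝ) else 0) * B').det
      = ∑ S ∈ Finset.powersetCard s (univ : Finset (Fin n)),
          ((Xᵀ * sel S * X).updateCol j (Pi.single i 1)).det := by
    refine Finset.sum_bij' (fun Sh _ => Sh.toLeft)
      (fun S _ => insert (Sum.inr ()) (S.map ⟨Sum.inl, Sum.inl_injective⟩)) ?_ ?_ ?_ ?_ ?_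
    · intro Sh hSh
      obtain ⟨hmem, hr⟩ := Finset.mem_filter.mp hSh
      obtain ⟨-, hcard⟩ := Finset.mem_powersetCard.mp hmem
      have h1 : Sh.toRight.card = 1 := by
        apply le_antisymm
        · calc Sh.toRight.card ≤ (univ : Finset Unit).card := Finset.card_le_univ _
            _ = 1 := by simp
        · exact Finset.card_pos.mpr ⟨(), Finset.mem_toRight.mpr hr⟩
      have h2 := Finset.card_toLeft_add_card_toRight (u := Sh)
      rw [h1, hcard] at h2
      refine Finset.mem_powersetCard.mpr ⟨Finset.subset_univ _, ?_⟩
      show Sh.toLeft.card = s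
      omega
    · intro S hS
      obtain ⟨-, hcard⟩ := Finset.mem_powersetCard.mp hS
      have hnm : Sum.inr () ∉ S.map ⟨Sum.inl, Sum.inl_injective⟩ := by
        simp
      refine Finset.mem_filter.mpr ⟨Finset.mem_powersetCard.mpr
        ⟨Finset.subset_univ _, ?_⟩, Finset.mem_insert_self _ _⟩
      rw [Finset.card_insert_of_notMem hnm, Finset.card_map, hcard]
    · intro Sh hSh
      obtain ⟨-, hr⟩ := Finset.mem_filter.mp hSh
      ext x
      cases x with
      | inl a => simp [Finset.mem_toLeft]
      | inr u => cases u; simp [hr]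
    · intro S hS
      ext a
      simp [Finset.mem_toLeft]
    · intro Sh hSh
      obtain ⟨-, hr⟩ := Finset.mem_filter.mp hSh
      rw [claim1 Sh hr]
  rw [hbij] at hmain
  rw [hmain]
  -- now the right-hand side
  have huniv : A'ᵀ * B' = (Xᵀ * X).updateCol j (Pi.single i 1) := by
    have h1 := claim1 (univ : Finset (Fin n ⊕ Unit)) (Finset.mem_univ _)
    have h2 : Matrix.diagonal (fun x : Fin n ⊕ Unit =>
        if x ∈ (univ : Finset (Fin n ⊕ Unit)) then (1:ℝ) else 0) = 1 := by
      simp [Matrix.diagonal_one]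
    have h3 : sel (univ : Finset (Fin n ⊕ Unit)).toLeft = (1 : Matrix (Fin n) (Fin n) ℝ) := by
      simp [sel]
    rw [h2, Matrix.mul_one, h3, Matrix.mul_one] at h1
    exact h1
  rw [huniv]
  have hc : (Fintype.card (Fin n ⊕ Unit) - d).choose (s + 1 - d)
      = (n - d + 1).choose (s - d + 1) := by
    rw [Fintype.card_sum, Fintype.card_fin, Fintype.card_unit]
    congr 1 <;> omega
  rw [hc]

/-- Matrix variance of the pseudoinverse estimator under size-`s` volume sampling:
`E[(I_S X)⁺((I_S X)⁺)^⊤] − E[(I_S X)⁺] E[(I_S X)⁺]^⊤ = ((n−s)/(s−d+1)) X⁺(X⁺)^⊤`. -/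
theorem volume_sampling_pinv_variance {n d : ℕ} (X : Matrix (Fin n) (Fin d) ℝ)
    (hrank : X.rank = d) (hdn : d ≤ n) (s : ℕ) (hds : d ≤ s) (hsn : s ≤ n)
    (hfull : ∀ S ∈ Finset.powersetCard s (Finset.univ : Finset (Fin n)),
      (gram X S).det ≠ 0) :
    (∑ S ∈ Finset.powersetCard s (Finset.univ : Finset (Fin n)),
        ((gram X S).det / (((n - d).choose (s - d) : ℝ) * (Xᵀ * X).det)) •
          (pinv (sel S * X) * (pinv (sel S * X))ᵀ))
      - (∑ S ∈ Finset.powersetCard s (Finset.univ : Finset (Fin n)),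
          ((gram X S).det / (((n - d).choose (s - d) : ℝ) * (Xᵀ * X).det)) •
            pinv (sel S * X))
        * (∑ S ∈ Finset.powersetCard s (Finset.univ : Finset (Fin n)),
            ((gram X S).det / (((n - d).choose (s - d) : ℝ) * (Xᵀ * X).det)) •
              pinv (sel S * X))ᵀ
      = (((n : ℝ) - s) / ((s : ℝ) - d + 1)) • (pinv X * (pinv X)ᵀ) := by
  classical
  -- gram is the selected Gram matrix
  have hgram : ∀ S : Finset (Fin n), gram X S = Xᵀ * sel S * X := by
    intro S
    ext a b
    have hL : gram X S a b = ∑ i ∈ S, X i a * X i b := by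
      rw [_root_.gram, Matrix.mul_apply]
      rw [← Finset.sum_coe_sort S (fun i => X i a * X i b)]
      rfl
    have hR : (Xᵀ * sel S * X) a b = ∑ i ∈ S, X i a * X i b := by
      rw [Matrix.mul_apply]
      simp only [sel, Matrix.mul_diagonal, Matrix.transpose_apply, mul_assoc, ite_mul,
        one_mul, zero_mul, mul_ite, mul_zero]
      rw [Finset.sum_ite_mem, Finset.univ_inter]
    rw [hL, hR]
  -- invertibility of the full Gram matrix
  have hdetG : IsUnit (Xᵀ * X).det := by
    have hrk : Module.finrank ℝ (LinearMap.range (Xᵀ * X).mulVecLin) = d := by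
      have : (Xᵀ * X).rank = d := by rw [Matrix.rank_transpose_mul_self, hrank]
      exact this
    have htop : LinearMap.range (Xᵀ * X).mulVecLin = ⊤ := by
      apply Submodule.eq_top_of_finrank_eq
      rw [hrk, Module.finrank_fintype_fun_eq_card, Fintype.card_fin]
    have hsurj : Function.Surjective ((Xᵀ * X).mulVec) := by
      intro y
      obtain ⟨x, hx⟩ := LinearMap.range_eq_top.mp htop y
      exact ⟨x, hx⟩
    exact (Matrix.isUnit_iff_isUnit_det _).mp (Matrix.mulVec_surjective_iff_isUnit.mp hsurj)
  have hdetG0 : (Xᵀ * X).det ≠ 0 := hdetG.ne_zero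
  -- symmetry / idempotency of selection matrices
  have hselT : ∀ S : Finset (Fin n), (sel S)ᵀ = sel S := fun S => Matrix.diagonal_transpose _
  have hsel2 : ∀ S : Finset (Fin n), sel S * sel S = sel S := by
    intro S
    have hfun : ∀ x : Fin n, (if x ∈ S then (1:ℝ) else 0) * (if x ∈ S then (1:ℝ) else 0)
        = (if x ∈ S then (1:ℝ) else 0) := fun x => by by_cases h : x ∈ S <;> simp [h]
    rw [sel, Matrix.diagonal_mul_diagonal]
    exact congrArg Matrix.diagonal (funext hfun)
  have hsymmS : ∀ S : Finset (Fin n), (Xᵀ * sel S * X)ᵀ = Xᵀ * sel S * X := by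
    intro S
    rw [Matrix.transpose_mul, Matrix.transpose_mul, Matrix.transpose_transpose, hselT,
      Matrix.mul_assoc]
  -- pinv formulas
  have hdetS : ∀ S ∈ Finset.powersetCard s (univ : Finset (Fin n)),
      IsUnit (Xᵀ * sel S * X).det := by
    intro S hS
    have := hfull S hS
    rw [hgram S] at this
    exact this.isUnit
  have hpinvS : ∀ S ∈ Finset.powersetCard s (univ : Finset (Fin n)),
      pinv (sel S * X) = (Xᵀ * sel S * X)⁻¹ * (Xᵀ * sel S) := by
    intro S hS
    exact pinv_eq (isMP_proj X (sel S) (hselT S) (hsel2 S) (hdetS S hS))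
  have hpinvX : pinv X = (Xᵀ * X)⁻¹ * Xᵀ := by
    have h := isMP_proj X 1 Matrix.transpose_one (Matrix.one_mul 1)
      (by rwa [Matrix.mul_one])
    rw [Matrix.mul_one, Matrix.one_mul] at h
    exact pinv_eq h
  -- pinv * pinvᵀ = inverse of the Gram matrix
  have hinner : ∀ (W : Matrix (Fin n) (Fin n) ℝ), Wᵀ = W → W * W = W →
      IsUnit (Xᵀ * W * X).det →
      ((Xᵀ * W * X)⁻¹ * (Xᵀ * W)) * ((Xᵀ * W * X)⁻¹ * (Xᵀ * W))ᵀ = (Xᵀ * W * X)⁻¹ := by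
    intro W hWs hWW hdet
    have hGs : (Xᵀ * W * X)ᵀ = Xᵀ * W * X := by
      rw [Matrix.transpose_mul, Matrix.transpose_mul, Matrix.transpose_transpose, hWs,
        Matrix.mul_assoc]
    have hGit : ((Xᵀ * W * X)⁻¹)ᵀ = (Xᵀ * W * X)⁻¹ := by
      rw [Matrix.transpose_nonsing_inv, hGs]
    have htr : ((Xᵀ * W * X)⁻¹ * (Xᵀ * W))ᵀ = W * X * (Xᵀ * W * X)⁻¹ := by
      rw [Matrix.transpose_mul, Matrix.transpose_mul, Matrix.transpose_transpose, hWs, hGit]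
    rw [htr]
    have hW2 : W * (W * X) = W * X := by rw [← Matrix.mul_assoc, hWW]
    calc (Xᵀ * W * X)⁻¹ * (Xᵀ * W) * (W * X * (Xᵀ * W * X)⁻¹)
        = (Xᵀ * W * X)⁻¹ * (Xᵀ * (W * (W * X))) * (Xᵀ * W * X)⁻¹ := by
          simp only [Matrix.mul_assoc]
      _ = (Xᵀ * W * X)⁻¹ * (Xᵀ * W * X) * (Xᵀ * W * X)⁻¹ := by
          rw [hW2, Matrix.mul_assoc (Xᵀ) W X]
      _ = (Xᵀ * W * X)⁻¹ := by
          rw [Matrix.nonsing_inv_mul _ hdet, Matrix.one_mul]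
  -- constants
  set C : ℝ := (((n - d).choose (s - d) : ℕ) : ℝ) with hC
  set C' : ℝ := (((n - d + 1).choose (s - d + 1) : ℕ) : ℝ) with hC'
  have hC0 : C ≠ 0 := by
    rw [hC]
    exact Nat.cast_ne_zero.mpr (Nat.choose_pos (Nat.sub_le_sub_right hsn d)).ne'
  -- first sum
  have hsum1 : (∑ S ∈ Finset.powersetCard s (Finset.univ : Finset (Fin n)),
        ((gram X S).det / (C * (Xᵀ * X).det)) •
          (pinv (sel S * X) * (pinv (sel S * X))ᵀ))
      = (C' / C) • (Xᵀ * X)⁻¹ := by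
    have hterm : ∀ S ∈ Finset.powersetCard s (univ : Finset (Fin n)),
        ((gram X S).det / (C * (Xᵀ * X).det)) •
          (pinv (sel S * X) * (pinv (sel S * X))ᵀ)
        = (1 / (C * (Xᵀ * X).det)) • (Xᵀ * sel S * X).adjugate := by
      intro S hS
      rw [hpinvS S hS, hinner (sel S) (hselT S) (hsel2 S) (hdetS S hS), hgram S]
      rw [Matrix.inv_def, Ring.inverse_eq_inv']
      rw [smul_smul]
      have ha : (Xᵀ * sel S * X).det ≠ 0 := (hdetS S hS).ne_zero
      congr 1
      field_simp
    rw [Finset.sum_congr rfl hterm, ← Finset.smul_sum, sum_adj X s hdn hds]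
    rw [smul_smul]
    have hadj : (Xᵀ * X).adjugate = (Xᵀ * X).det • (Xᵀ * X)⁻¹ := by
      rw [Matrix.inv_def, Ring.inverse_eq_inv', smul_smul, mul_inv_cancel₀ hdetG0, one_smul]
    rw [hadj, smul_smul]
    congr 1
    field_simp
    ring
  -- second sum
  have hsum2 : (∑ S ∈ Finset.powersetCard s (Finset.univ : Finset (Fin n)),
        ((gram X S).det / (C * (Xᵀ * X).det)) • pinv (sel S * X))
      = pinv X := by
    have hterm : ∀ S ∈ Finset.powersetCard s (univ : Finset (Fin n)),
        ((gram X S).det / (C * (Xᵀ * X).det)) • pinv (sel S * X)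
        = (1 / (C * (Xᵀ * X).det)) • ((Xᵀ * sel S * X).adjugate * (Xᵀ * sel S)) := by
      intro S hS
      rw [hpinvS S hS, hgram S]
      rw [Matrix.inv_def, Ring.inverse_eq_inv']
      rw [Matrix.smul_mul, smul_smul]
      have ha : (Xᵀ * sel S * X).det ≠ 0 := (hdetS S hS).ne_zero
      congr 1
      field_simp
    rw [Finset.sum_congr rfl hterm, ← Finset.smul_sum, sum_adj_mul X s hds]
    rw [smul_smul, hpinvX]
    have hadj : (Xᵀ * X).adjugate * Xᵀ = (Xᵀ * X).det • ((Xᵀ * X)⁻¹ * Xᵀ) := by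
      rw [Matrix.inv_def, Ring.inverse_eq_inv', Matrix.smul_mul, smul_smul,
        mul_inv_cancel₀ hdetG0, one_smul]
    rw [hadj, smul_smul]
    have : 1 / (C * (Xᵀ * X).det) * C * (Xᵀ * X).det = 1 := by
      field_simp
    rw [this, one_smul]
  -- RHS inverse formula
  have hrhs : pinv X * (pinv X)ᵀ = (Xᵀ * X)⁻¹ := by
    rw [hpinvX]
    have h := hinner 1 Matrix.transpose_one (Matrix.one_mul 1) (by rwa [Matrix.mul_one])
    simp only [Matrix.mul_one] at h
    exact h
  rw [hsum1, hsum2, hrhs]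
  -- final scalar arithmetic
  have hkey : ((n : ℝ) - d + 1) * C = ((s : ℝ) - d + 1) * C' := by
    have h := Nat.add_one_mul_choose_eq (n - d) (s - d)
    have h1 : ((n - d : ℕ) : ℝ) = (n : ℝ) - d := by
      rw [Nat.cast_sub hdn]
    have h2 : ((s - d : ℕ) : ℝ) = (s : ℝ) - d := by
      rw [Nat.cast_sub hds]
    have hcast : (((n - d).succ * (n - d).choose (s - d) : ℕ) : ℝ)
        = (((n - d + 1).choose (s - d + 1) * (s - d).succ : ℕ) : ℝ) := by
      exact_mod_cast congrArg (Nat.cast : ℕ → ℝ) h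
    push_cast at hcast
    rw [hC, hC']
    rw [h1, h2] at hcast
    linarith [hcast]
  have hsd0 : (s : ℝ) - d + 1 ≠ 0 := by
    have : (d : ℝ) ≤ s := by exact_mod_cast hds
    linarith
  have hscal : C' / C - 1 = ((n : ℝ) - s) / ((s : ℝ) - d + 1) := by
    rw [div_sub_one hC0, div_eq_div_iff hC0 hsd0]
    have : C' = ((n : ℝ) - d + 1) * C / ((s : ℝ) - d + 1) := by
      field_simp
      linarith [hkey]
    rw [this]
    field_simp
    ring
  rw [← hscal, sub_smul, one_smul]
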